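/- Let m be a positive integer, τ and ξ° real diagonal m×m matrices (with diagonal entries τ_k and ξ_k respectively), Θ the m×m matrix of all ones, and X(s) = ξ° + s·I. Let q, q₁, q̃, r, r_x, r_y be differentiable functions from ℝ to the real m×m matrices satisfying for all s: (i) dq/ds = q₁ − r q; (ii) dq₁/ds = −(r_x + r_y) q + X(s) q + r q₁; (iii) dr/ds = −r² + (r_x + r_y); and (iv) r_x + r_y = −q Θ q̃ + r² + [τ, r]. Then for all s: dr/ds = −q Θ q̃ + [τ, r], and q is twice differentiable with d²q/ds² = X(s) q + 2 q Θ q̃ q − 2 [τ, r] q. (This is the derivation of the ODE system 𝒟²q = ξ q + 2 q Θ q̃ q − 2[τ, r] q and 𝒟r = −q Θ q̃ + [τ, r] for the Airy process from the total system of PDEs, with 𝒟 = Σ_k ∂_k = d/ds after the shift ξ_k ↦ ξ_k + s.) -/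

import Mathlib

attribute [local instance] Matrix.normedAddCommGroup Matrix.normedSpace

/-- **Derivation of the ODE system (4.11)–(4.13) for the Airy process from the total
system of PDEs (Section IV of Tracy–Widom, "Differential Equations for Dyson
Processes").**  Let `τ = diag(τ_k)`, `ξ° = diag(ξ_k)`, `Θ` the all-ones matrix and
`X(s) = ξ° + s·I`.  If matrix-valued functions `q, q₁, q̃, r, r_x, r_y` satisfy
(i) `dq/ds = q₁ − r q`, (ii) `dq₁/ds = −(r_x + r_y) q + X(s) q + r q₁`,
(iii) `dr/ds = −r² + (r_x + r_y)` and (iv) `r_x + r_y = −q Θ q̃ + r² + [τ, r]`, then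
`dr/ds = −q Θ q̃ + [τ, r]` and `q` is twice differentiable with
`d²q/ds² = X(s) q + 2 q Θ q̃ q − 2 [τ, r] q`. -/
private lemma matrix_hasDerivAt_mul {m : ℕ} {f g : ℝ → Matrix (Fin m) (Fin m) ℝ}
    {f' g' : Matrix (Fin m) (Fin m) ℝ} {s : ℝ}
    (hf : HasDerivAt f f' s) (hg : HasDerivAt g g' s) :
    HasDerivAt (fun t => f t * g t) (f' * g s + f s * g') s := by
  have hfe : ∀ i j, HasDerivAt (fun t => f t i j) (f' i j) s := by
    intro i j
    exact (hasDerivAt_pi.1 ((hasDerivAt_pi.1 hf) i)) j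
  have hge : ∀ i j, HasDerivAt (fun t => g t i j) (g' i j) s := by
    intro i j
    exact (hasDerivAt_pi.1 ((hasDerivAt_pi.1 hg) i)) j
  apply hasDerivAt_pi.2
  intro i
  apply hasDerivAt_pi.2
  intro j
  have : HasDerivAt (fun t => ∑ k, f t i k * g t k j)
      (∑ k, (f' i k * g s k j + f s i k * g' k j)) s :=
    HasDerivAt.fun_sum fun k _ => (hfe i k).fun_mul (hge k j)
  have heq : (fun t => (f t * g t) i j) = fun t => ∑ k, f t i k * g t k j := by
    funext t; simp [Matrix.mul_apply]
  rw [heq]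
  refine this.congr_deriv ?_
  simp [Matrix.mul_apply, Matrix.add_apply, Finset.sum_add_distrib]

theorem airy_process_ode_system (m : ℕ) (hm : 0 < m) (τv ξv : Fin m → ℝ)
    (q q₁ qt r rx ry : ℝ → Matrix (Fin m) (Fin m) ℝ)
    (Θ : Matrix (Fin m) (Fin m) ℝ) (hΘ : Θ = Matrix.of fun _ _ => (1 : ℝ))
    (X : ℝ → Matrix (Fin m) (Fin m) ℝ)
    (hX : ∀ s, X s = Matrix.diagonal ξv + s • (1 : Matrix (Fin m) (Fin m) ℝ))
    (τ : Matrix (Fin m) (Fin m) ℝ) (hτ : τ = Matrix.diagonal τv)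
    (hq : ∀ s, HasDerivAt q (q₁ s - r s * q s) s)
    (hq₁ : ∀ s, HasDerivAt q₁ (-(rx s + ry s) * q s + X s * q s + r s * q₁ s) s)
    (hr : ∀ s, HasDerivAt r (-(r s * r s) + (rx s + ry s)) s)
    (hsum : ∀ s, rx s + ry s = -(q s * Θ * qt s) + r s * r s + (τ * r s - r s * τ)) :
    (∀ s, HasDerivAt r (-(q s * Θ * qt s) + (τ * r s - r s * τ)) s) ∧
    (∀ s, HasDerivAt (deriv q)
      (X s * q s + 2 • (q s * Θ * qt s * q s) - 2 • ((τ * r s - r s * τ) * q s)) s) := by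
  constructor
  · intro s
    have h := hr s
    rw [hsum s] at h
    convert h using 1
    abel
  · intro s
    have hdq : deriv q = fun t => q₁ t - r t * q t := by
      funext t; exact (hq t).deriv
    rw [hdq]
    have key : HasDerivAt (fun t => q₁ t - r t * q t)
        ((-(rx s + ry s) * q s + X s * q s + r s * q₁ s)
          - ((-(r s * r s) + (rx s + ry s)) * q s + r s * (q₁ s - r s * q s))) s :=
      (hq₁ s).sub (matrix_hasDerivAt_mul (hr s) (hq s))
    convert key using 1
    rw [hsum s, two_smul, two_smul]
    noncomm_ring
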